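/- Under the assumptions of the relaxed triangle inequality theorem for the quasi-metric ρ, for any two landmarks z^l, z^j on the invariant manifold with ‖z^l − z^j‖ ≤ R√τ, the symmetrized quasi-metric ρ satisfies the two-sided comparison with the Euclidean distance: 1/min{α_l, α_j} ≤ sqrt(χ²_d(p))·ρ(z^l, z^j)/‖z^l − z^j‖ ≤ 1/min{β_l, β_j}. -/

import Mathlib

set_option maxHeartbeats 1000000
open Matrix
open scoped RealInnerProductSpace

/-- Euclidean norm of a plain vector. -/
noncomputable def eucEnorm {D : ℕ} (v : Fin D → ℝ) : ℝ := Real.sqrt (∑ i, v i ^ 2)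

noncomputable def toE {D : ℕ} (v : Fin D → ℝ) : EuclideanSpace ℝ (Fin D) :=
  (WithLp.equiv 2 (Fin D → ℝ)).symm v

lemma enorm_eq_norm {D : ℕ} (v : Fin D → ℝ) : eucEnorm v = ‖toE v‖ := by
  rw [EuclideanSpace.norm_eq, eucEnorm]
  congr 1; apply Finset.sum_congr rfl; intro i _
  simp [toE, Real.norm_eq_abs, sq_abs]

lemma dot_eq_inner {D : ℕ} (v w : Fin D → ℝ) :
    v ⬝ᵥ w = ⟪toE v, toE w⟫ := by
  simp [dotProduct, PiLp.inner_apply, RCLike.inner_apply, toE, mul_comm]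

section helpers
variable {E : Type*} [NormedAddCommGroup E] [InnerProductSpace ℝ E] [FiniteDimensional ℝ E]
  {K : Submodule ℝ E}
set_option linter.unusedSectionVars false

lemma best_approx (y : E) (p : E) (hp : p ∈ K) :
    ‖y - (K.orthogonalProjection y : E)‖ ≤ ‖y - p‖ := by
  have h := K.sub_starProjection_mem_orthogonal y
  have horth : ⟪y - K.orthogonalProjection y, (K.orthogonalProjection y : E) - p⟫ = 0 := by
    rw [real_inner_comm]
    exact h _ (Submodule.sub_mem K (K.orthogonalProjection y).2 hp)
  have : ‖y - p‖ ^ 2 = ‖y - (K.orthogonalProjection y : E)‖ ^ 2 + ‖(K.orthogonalProjection y : E) - p‖ ^ 2 := by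
    have := norm_add_sq_real (y - (K.orthogonalProjection y : E)) ((K.orthogonalProjection y : E) - p)
    simp only [sub_add_sub_cancel] at this
    rw [this, horth]; ring
  nlinarith [norm_nonneg (y - p), norm_nonneg (y - (K.orthogonalProjection y : E))]

lemma proj_norm_le (f : E) (c : ℝ) (hc : 0 ≤ c)
    (h : ∀ t ∈ K, |⟪t, f⟫| ≤ c * ‖t‖ * ‖f‖) :
    ‖(K.orthogonalProjection f : E)‖ ≤ c * ‖f‖ := by
  set p : E := (K.orthogonalProjection f : E) with hp
  have hmem : p ∈ K := (K.orthogonalProjection f).2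
  have h0 : ⟪p, f - p⟫ = 0 := K.sub_starProjection_mem_orthogonal f p hmem
  have hpp : ‖p‖ ^ 2 = ⟪p, f⟫ := by
    have h2 : ⟪p, f⟫ - ⟪p, p⟫ = 0 := by rw [← inner_sub_right]; exact h0
    rw [← real_inner_self_eq_norm_sq]; linarith
  have hb := h p hmem
  rcases eq_or_lt_of_le (norm_nonneg p) with h1 | h1
  · rw [← h1]; positivity
  · have : ‖p‖ ^ 2 ≤ c * ‖p‖ * ‖f‖ := le_trans (hpp ▸ le_abs_self _) hb
    nlinarith

end helpers

/-- Key geometric lemma: bounds on the tangential component of the chord. -/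
lemma keyV {D : ℕ} (Tm Fm : Submodule ℝ (Fin D → ℝ)) (θc θm : ℝ)
    (hθc0 : 0 ≤ θc) (hθc2 : θc < Real.pi / 2) (hθ1 : θc < θm) (hθ2 : θm ≤ Real.pi / 2)
    (δ u fv : Fin D → ℝ) (hu : u ∈ Tm) (hf : fv ∈ Fm)
    (hsum : δ = u + fv)
    (hangle : ∀ t ∈ Tm, ∀ v ∈ Fm, |t ⬝ᵥ v| ≤ Real.cos θm * eucEnorm t * eucEnorm v)
    (p : Fin D → ℝ) (hp : p ∈ Tm) (hch : eucEnorm (δ - p) ≤ Real.sin θc * eucEnorm δ) :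
    (Real.cos θc - Real.sin θc * Real.cos θm / Real.sin θm) * eucEnorm δ ≤ eucEnorm u ∧
      Real.sin θm * eucEnorm u ≤ eucEnorm δ := by
  have hs : 0 < Real.sin θm := Real.sin_pos_of_pos_of_lt_pi (lt_of_le_of_lt hθc0 hθ1)
    (lt_of_le_of_lt hθ2 (by linarith [Real.pi_pos]))
  have hc0 : 0 ≤ Real.cos θm := Real.cos_nonneg_of_mem_Icc
    ⟨by linarith [le_of_lt (lt_of_le_of_lt hθc0 hθ1), Real.pi_pos], hθ2⟩
  have hcs : Real.cos θm ^ 2 + Real.sin θm ^ 2 = 1 := Real.cos_sq_add_sin_sq θm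
  have hsc0 : 0 ≤ Real.sin θc := Real.sin_nonneg_of_nonneg_of_le_pi hθc0
    (by linarith [Real.pi_pos])
  -- move to EuclideanSpace
  set V := EuclideanSpace ℝ (Fin D)
  set K : Submodule ℝ V := Tm.comap (WithLp.linearEquiv 2 ℝ (Fin D → ℝ)).toLinearMap with hK
  let δ' : V := toE δ; let u' : V := toE u; let f' : V := toE fv; let p' : V := toE p
  have hu' : u' ∈ K := hu
  have hp' : p' ∈ K := hp
  have hsum' : δ' = u' + f' := by simp only [δ', u', f', hsum]; rfl
  have hangle' : ∀ t ∈ K, |⟪t, f'⟫| ≤ Real.cos θm * ‖t‖ * ‖f'‖ := by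
    intro t ht
    have := hangle ((WithLp.equiv 2 (Fin D → ℝ)) t) ht fv hf
    rwa [dot_eq_inner, enorm_eq_norm, enorm_eq_norm] at this
  -- upper bound : sin θm * ‖u'‖ ≤ ‖δ'‖
  have hinner_uf : |⟪u', f'⟫| ≤ Real.cos θm * ‖u'‖ * ‖f'‖ := hangle' u' hu'
  have hupper : Real.sin θm * ‖u'‖ ≤ ‖δ'‖ := by
    have h2 : ‖δ'‖ ^ 2 = ‖u'‖ ^ 2 + 2 * ⟪u', f'⟫ + ‖f'‖ ^ 2 := by
      rw [hsum']; exact norm_add_sq_real u' f'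
    have habs := abs_le.1 hinner_uf
    nlinarith [norm_nonneg δ', norm_nonneg u', norm_nonneg f', mul_nonneg hs.le (norm_nonneg u'),
      sq_nonneg (Real.cos θm * ‖u'‖ - ‖f'‖), sq_nonneg (Real.sin θm * ‖u'‖ + ‖δ'‖)]
  -- lower bound
  have hlower : (Real.cos θc - Real.sin θc * Real.cos θm / Real.sin θm) * ‖δ'‖ ≤ ‖u'‖ := by
    set πδ : V := (K.orthogonalProjection δ' : V) with hπδ
    set πf : V := (K.orthogonalProjection f' : V) with hπf
    have hπsum : πδ = u' + πf := by
      rw [hπδ, hπf, hsum', map_add]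
      have : (K.orthogonalProjection u' : V) = u' := Submodule.starProjection_eq_self_iff.2 hu'
      push_cast
      rw [this]
    have hba : ‖δ' - πδ‖ ≤ Real.sin θc * ‖δ'‖ := by
      refine le_trans (best_approx δ' p' hp') ?_
      have := hch
      rwa [enorm_eq_norm, enorm_eq_norm] at this
    have hpyth : ‖δ'‖ ^ 2 = ‖πδ‖ ^ 2 + ‖δ' - πδ‖ ^ 2 := by
      have h0 : ⟪πδ, δ' - πδ⟫ = 0 :=
        K.sub_starProjection_mem_orthogonal δ' πδ (K.orthogonalProjection δ').2
      have := norm_add_sq_real πδ (δ' - πδ)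
      simp only [add_sub_cancel] at this
      rw [this, h0]; ring
    have hπf_le : ‖πf‖ ≤ Real.cos θm * ‖f'‖ := proj_norm_le f' (Real.cos θm) hc0 hangle'
    -- ‖f'‖ bound: sin θm * ‖f'‖ ≤ sin θc * ‖δ'‖
    have hfδ : δ' - πδ = f' - πf := by rw [hπsum, hsum']; abel
    have hf_bound : Real.sin θm * ‖f'‖ ≤ Real.sin θc * ‖δ'‖ := by
      have hfp : ‖f'‖ ^ 2 = ‖πf‖ ^ 2 + ‖f' - πf‖ ^ 2 := by
        have h0 : ⟪πf, f' - πf⟫ = 0 :=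
          K.sub_starProjection_mem_orthogonal f' πf (K.orthogonalProjection f').2
        have := norm_add_sq_real πf (f' - πf)
        simp only [add_sub_cancel] at this
        rw [this, h0]; ring
      have h1 : ‖f' - πf‖ ≤ Real.sin θc * ‖δ'‖ := hfδ ▸ hba
      nlinarith [norm_nonneg f', norm_nonneg πf, norm_nonneg (f' - πf),
        mul_nonneg hsc0 (norm_nonneg δ'), mul_nonneg hs.le (norm_nonneg f')]
    -- ‖πδ‖ ≥ cos θc * ‖δ'‖
    have hcc0 : 0 ≤ Real.cos θc := Real.cos_nonneg_of_mem_Icc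
      ⟨by linarith [Real.pi_pos], hθc2.le⟩
    have hccs : Real.cos θc ^ 2 + Real.sin θc ^ 2 = 1 := Real.cos_sq_add_sin_sq θc
    have hπδ_ge : Real.cos θc * ‖δ'‖ ≤ ‖πδ‖ := by
      nlinarith [norm_nonneg πδ, norm_nonneg δ', hba, norm_nonneg (δ' - πδ),
        mul_nonneg hcc0 (norm_nonneg δ'), mul_nonneg hsc0 (norm_nonneg δ')]
    -- combine
    have htri : ‖πδ‖ - ‖πf‖ ≤ ‖u'‖ := by
      have : ‖πδ‖ ≤ ‖u'‖ + ‖πf‖ := hπsum ▸ norm_add_le u' πf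
      linarith
    have hfin : ‖f'‖ ≤ Real.sin θc * ‖δ'‖ / Real.sin θm := by
      rw [le_div_iff₀ hs]; linarith [hf_bound]
    have : Real.cos θc * ‖δ'‖ - Real.cos θm * (Real.sin θc * ‖δ'‖ / Real.sin θm) ≤ ‖u'‖ := by
      have h3 : Real.cos θm * ‖f'‖ ≤ Real.cos θm * (Real.sin θc * ‖δ'‖ / Real.sin θm) :=
        mul_le_mul_of_nonneg_left hfin hc0
      linarith
    calc (Real.cos θc - Real.sin θc * Real.cos θm / Real.sin θm) * ‖δ'‖
        = Real.cos θc * ‖δ'‖ - Real.cos θm * (Real.sin θc * ‖δ'‖ / Real.sin θm) := by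
          field_simp
      _ ≤ ‖u'‖ := this
  rw [enorm_eq_norm, enorm_eq_norm]
  exact ⟨hlower, hupper⟩


open Matrix

lemma enorm_neg' {D : ℕ} (v : Fin D → ℝ) : eucEnorm (-v) = eucEnorm v := by
  simp [eucEnorm, neg_sq]

lemma enorm_nonneg' {D : ℕ} (v : Fin D → ℝ) : 0 ≤ eucEnorm v := Real.sqrt_nonneg _

/-- Two-sided comparison of the symmetrized quasi-metric `ρ` with the Euclidean distance:
for nearby landmarks, `1/min{α_l, α_j} ≤ √χ²_d(p) ρ(z^l, z^j)/‖z^l − z^j‖ ≤ 1/min{β_l, β_j}`,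
where `α_l = √σ₁(Λ^l)/(cos θ_c − sin θ_c/tan θ^l)` and `β_l = sin θ^l √σ_d(Λ^l)`. -/
theorem stmt7 {D L : ℕ} (d : ℕ)
    (z : Fin L → (Fin D → ℝ))
    (T F : Fin L → Submodule ℝ (Fin D → ℝ))
    (P : Fin L → (Fin D → ℝ) → (Fin D → ℝ))
    (Λdag : Fin L → Matrix (Fin D) (Fin D) ℝ)
    (σ1 σd : Fin L → ℝ) (θc : ℝ) (θ : Fin L → ℝ)
    (χ R τ : ℝ)
    (ρt : (Fin D → ℝ) → (Fin D → ℝ) → ℝ)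
    (ρ : Fin L → Fin L → ℝ)
    (hχ : 0 < χ) (hR : 0 < R) (hτ : 0 < τ)
    (hσd : ∀ l, 0 < σd l) (hσ1 : ∀ l, σd l ≤ σ1 l)
    (hθc : 0 ≤ θc ∧ θc < Real.pi / 2)
    (hθ : ∀ l, θc < θ l ∧ θ l ≤ Real.pi / 2)
    (hPrange : ∀ l w, P l w - z l ∈ T l)
    (hPker : ∀ l w, w - P l w ∈ F l)
    (hangleTF : ∀ l, ∀ u ∈ T l, ∀ v ∈ F l,
      |u ⬝ᵥ v| ≤ Real.cos (θ l) * eucEnorm u * eucEnorm v)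
    (hspec : ∀ l, ∀ v ∈ T l,
      (eucEnorm v) ^ 2 / σ1 l ≤ v ⬝ᵥ ((Λdag l) *ᵥ v) ∧
        v ⬝ᵥ ((Λdag l) *ᵥ v) ≤ (eucEnorm v) ^ 2 / σd l)
    (hρt_near : ∀ l w, eucEnorm (w - z l) ≤ R * Real.sqrt τ →
      ρt w (z l) = Real.sqrt (((P l w - z l) ⬝ᵥ ((Λdag l) *ᵥ (P l w - z l))) / χ))
    (hρt_far : ∀ l w, ¬ eucEnorm (w - z l) ≤ R * Real.sqrt τ →
      ρt w (z l) = R * Real.sqrt (χ * σd l) * Real.sqrt τ)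
    (hρ : ∀ l j, ρ l j = max (ρt (z l) (z j)) (ρt (z j) (z l)))
    (hchord : ∀ l j, eucEnorm (z l - z j) ≤ R * Real.sqrt τ →
      ∃ p ∈ T j, eucEnorm ((z l - z j) - p) ≤ Real.sin θc * eucEnorm (z l - z j)) :
    ∀ l j : Fin L, l ≠ j → z l ≠ z j → eucEnorm (z l - z j) ≤ R * Real.sqrt τ →
      1 / min (Real.sqrt (σ1 l) / (Real.cos θc - Real.sin θc / Real.tan (θ l)))
              (Real.sqrt (σ1 j) / (Real.cos θc - Real.sin θc / Real.tan (θ j)))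
          ≤ Real.sqrt χ * ρ l j / eucEnorm (z l - z j) ∧
      Real.sqrt χ * ρ l j / eucEnorm (z l - z j)
          ≤ 1 / min (Real.sin (θ l) * Real.sqrt (σd l))
                    (Real.sin (θ j) * Real.sqrt (σd j)) := by
  obtain ⟨hθc0, hθc2⟩ := hθc
  -- basic positivity facts per landmark
  have hspos : ∀ m, 0 < Real.sin (θ m) := fun m =>
    Real.sin_pos_of_pos_of_lt_pi (lt_of_le_of_lt hθc0 (hθ m).1)
      (lt_of_le_of_lt (hθ m).2 (by linarith [Real.pi_pos]))
  have hcpos : ∀ m, 0 ≤ Real.cos (θ m) := fun m =>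
    Real.cos_nonneg_of_mem_Icc
      ⟨by linarith [le_of_lt (lt_of_le_of_lt hθc0 (hθ m).1), Real.pi_pos], (hθ m).2⟩
  have hden : ∀ m, 0 < Real.cos θc - Real.sin θc * Real.cos (θ m) / Real.sin (θ m) := by
    intro m
    have h1 : 0 < Real.sin (θ m - θc) := by
      apply Real.sin_pos_of_pos_of_lt_pi
      · linarith [(hθ m).1]
      · have := (hθ m).2; nlinarith [Real.pi_pos]
    rw [Real.sin_sub] at h1
    have hs := hspos m
    rw [sub_pos, div_lt_iff₀ hs]
    nlinarith
  have htan : ∀ m, Real.sin θc / Real.tan (θ m)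
      = Real.sin θc * Real.cos (θ m) / Real.sin (θ m) := fun m => by
    rw [Real.tan_eq_sin_div_cos, div_div_eq_mul_div]
  have hσ1pos : ∀ m, 0 < σ1 m := fun m => lt_of_lt_of_le (hσd m) (hσ1 m)
  have hαpos : ∀ m, 0 < Real.sqrt (σ1 m) / (Real.cos θc - Real.sin θc / Real.tan (θ m)) := by
    intro m; rw [htan m]; exact div_pos (Real.sqrt_pos.2 (hσ1pos m)) (hden m)
  have hβpos : ∀ m, 0 < Real.sin (θ m) * Real.sqrt (σd m) := fun m =>
    mul_pos (hspos m) (Real.sqrt_pos.2 (hσd m))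
  -- key one-sided bound
  have key : ∀ a b : Fin L, eucEnorm (z a - z b) ≤ R * Real.sqrt τ →
      ((Real.cos θc - Real.sin θc * Real.cos (θ b) / Real.sin (θ b)) / Real.sqrt (σ1 b))
          * eucEnorm (z a - z b) ≤ Real.sqrt χ * ρt (z a) (z b) ∧
        Real.sqrt χ * ρt (z a) (z b) ≤ eucEnorm (z a - z b) / (Real.sin (θ b) * Real.sqrt (σd b)) := by
    intro a b hnear
    set u : Fin D → ℝ := P b (z a) - z b with hu_def
    set fv : Fin D → ℝ := z a - P b (z a) with hf_def
    have hu : u ∈ T b := hPrange b (z a)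
    have hf : fv ∈ F b := hPker b (z a)
    have hsum : z a - z b = u + fv := by rw [hu_def, hf_def]; abel
    obtain ⟨p, hp, hch⟩ := hchord a b hnear
    obtain ⟨hlow, hup⟩ := keyV (T b) (F b) θc (θ b) hθc0 hθc2 (hθ b).1 (hθ b).2
      (z a - z b) u fv hu hf hsum (hangleTF b) p hp hch
    -- quadratic form bounds
    set q : ℝ := u ⬝ᵥ ((Λdag b) *ᵥ u) with hq_def
    obtain ⟨hq1, hq2⟩ := hspec b u hu
    have hq0 : 0 ≤ q := le_trans (div_nonneg (pow_nonneg (enorm_nonneg' u) 2) (hσ1pos b).le) hq1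
    have hρval : Real.sqrt χ * ρt (z a) (z b) = Real.sqrt q := by
      rw [hρt_near b (z a) hnear, ← hq_def, Real.sqrt_div hq0, mul_comm,
        div_mul_cancel₀ _ (by positivity : Real.sqrt χ ≠ 0)]
    rw [hρval]
    have hsqd : Real.sqrt q ≤ eucEnorm u / Real.sqrt (σd b) := by
      rw [← Real.sqrt_sq (div_nonneg (enorm_nonneg' u) (Real.sqrt_nonneg _))]
      apply Real.sqrt_le_sqrt
      rw [div_pow, Real.sq_sqrt (hσd b).le]
      exact hq2
    have hsq1 : eucEnorm u / Real.sqrt (σ1 b) ≤ Real.sqrt q := by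
      rw [← Real.sqrt_sq (div_nonneg (enorm_nonneg' u) (Real.sqrt_nonneg _))]
      apply Real.sqrt_le_sqrt
      rw [div_pow, Real.sq_sqrt (hσ1pos b).le]
      exact hq1
    constructor
    · refine le_trans ?_ hsq1
      rw [div_mul_eq_mul_div, div_le_div_iff₀ (Real.sqrt_pos.2 (hσ1pos b)) (Real.sqrt_pos.2 (hσ1pos b))]
      nlinarith [hlow, Real.sqrt_pos.2 (hσ1pos b)]
    · refine le_trans hsqd ?_
      rw [div_le_div_iff₀ (Real.sqrt_pos.2 (hσd b)) (hβpos b)]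
      have := hup
      nlinarith [Real.sqrt_pos.2 (hσd b), hspos b]
  -- assembly
  intro l j hlj hzlj hnear
  have hnear' : eucEnorm (z j - z l) ≤ R * Real.sqrt τ := by
    have : z j - z l = -(z l - z j) := by abel
    rw [this, enorm_neg']; exact hnear
  set Δ : ℝ := eucEnorm (z l - z j) with hΔ_def
  have hΔpos : 0 < Δ := by
    rw [hΔ_def, enorm_eq_norm]
    rw [norm_pos_iff]
    intro h
    apply hzlj
    have : z l - z j = 0 := by
      have := congrArg (WithLp.equiv 2 (Fin D → ℝ)) h
      simpa [toE] using this
    exact sub_eq_zero.1 this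
  obtain ⟨hA1, hA2⟩ := key l j hnear
  obtain ⟨hB1, hB2⟩ := key j l hnear'
  have hΔeq : eucEnorm (z j - z l) = Δ := by
    have : z j - z l = -(z l - z j) := by abel
    rw [this, enorm_neg']
  rw [hΔeq] at hB1 hB2
  rw [hρ l j, mul_max_of_nonneg _ _ (Real.sqrt_nonneg χ)]
  set A : ℝ := Real.sqrt χ * ρt (z l) (z j)
  set B : ℝ := Real.sqrt χ * ρt (z j) (z l)
  set αl := Real.sqrt (σ1 l) / (Real.cos θc - Real.sin θc / Real.tan (θ l)) with hαl
  set αj := Real.sqrt (σ1 j) / (Real.cos θc - Real.sin θc / Real.tan (θ j)) with hαj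
  set βl := Real.sin (θ l) * Real.sqrt (σd l) with hβl
  set βj := Real.sin (θ j) * Real.sqrt (σd j) with hβj
  have hinvαj : 1 / αj * Δ ≤ A := by
    rw [hαj, htan j, one_div_div]; exact hA1
  have hinvαl : 1 / αl * Δ ≤ B := by
    rw [hαl, htan l, one_div_div]; exact hB1
  have hAβ : A ≤ Δ / βj := hA2
  have hBβ : B ≤ Δ / βl := hB2
  constructor
  · rw [le_div_iff₀ hΔpos]
    rcases min_cases αl αj with ⟨h1, _⟩ | ⟨h1, _⟩
    · rw [h1]; exact le_trans hinvαl (le_trans (le_max_right A B) (le_refl _))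
    · rw [h1]; exact le_trans hinvαj (le_max_left A B)
  · rw [div_le_iff₀ hΔpos]
    have hminβ : 0 < min βl βj := lt_min (hβpos l) (hβpos j)
    apply max_le
    · refine le_trans hAβ ?_
      calc Δ / βj ≤ Δ / min βl βj :=
            div_le_div_of_nonneg_left hΔpos.le hminβ (min_le_right _ _)
        _ = 1 / min βl βj * Δ := by rw [div_eq_mul_one_div, mul_comm]
    · refine le_trans hBβ ?_
      calc Δ / βl ≤ Δ / min βl βj :=
            div_le_div_of_nonneg_left hΔpos.le hminβ (min_le_left _ _)
        _ = 1 / min βl βj * Δ := by rw [div_eq_mul_one_div, mul_comm]
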